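/- Let κ > 0, α = 1/4, and h as above. Then limsup_{t→+∞} (t - h(t))/log h(t) ≤ κ/16. Moreover, for 0 < α < 1/4, limsup_{t→+∞} (t - h(t))/log h(t) ≤ 0. -/

import Mathlib

open Real Filter MeasureTheory Set

/-- The change-of-variable function `g` (inverse of `h`). -/
noncomputable def gfun (κ α : ℝ) (u : ℝ) : ℝ :=
  ∫ s in (0:ℝ)..u, Real.sqrt (1 + 2*κ*α^2 * |s| ^ (2*(2*α-1)))

namespace Stmt15Aux

lemma sqrt_le_one_add_mul (c y : ℝ) (hc : 0 ≤ c) (hy : 0 ≤ y) :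
    Real.sqrt (1 + c * y ^ 2) ≤ 1 + Real.sqrt c * y := by
  have h1 : (0:ℝ) ≤ 1 + Real.sqrt c * y := by positivity
  have h2 : (Real.sqrt c) ^ 2 = c := Real.sq_sqrt hc
  have h3 : 1 + c * y ^ 2 ≤ (1 + Real.sqrt c * y) ^ 2 := by nlinarith [Real.sqrt_nonneg c]
  calc Real.sqrt (1 + c * y ^ 2) ≤ Real.sqrt ((1 + Real.sqrt c * y) ^ 2) :=
        Real.sqrt_le_sqrt h3
    _ = 1 + Real.sqrt c * y := Real.sqrt_sq h1

lemma sqrt_le_one_add_half (x : ℝ) (hx : 0 ≤ x) :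
    Real.sqrt (1 + x) ≤ 1 + x / 2 := by
  have h1 : (0:ℝ) ≤ 1 + x / 2 := by linarith
  have h3 : 1 + x ≤ (1 + x / 2) ^ 2 := by nlinarith
  calc Real.sqrt (1 + x) ≤ Real.sqrt ((1 + x / 2) ^ 2) := Real.sqrt_le_sqrt h3
    _ = 1 + x / 2 := Real.sqrt_sq h1

noncomputable def ffun (κ α : ℝ) (s : ℝ) : ℝ :=
  Real.sqrt (1 + 2*κ*α^2 * |s| ^ (2*(2*α-1)))

variable {κ α : ℝ}

lemma gfun_eq (u : ℝ) : gfun κ α u = ∫ s in (0:ℝ)..u, ffun κ α s := rfl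

lemma abs_rpow_sq (s : ℝ) : |s| ^ (2*(2*α-1)) = (|s| ^ (2*α-1)) ^ 2 := by
  rw [show 2*(2*α-1) = (2*α-1)*2 by ring, Real.rpow_mul (abs_nonneg s), Real.rpow_two]

lemma one_le_ffun (hκ : 0 < κ) (s : ℝ) : 1 ≤ ffun κ α s := by
  have h0 : (0:ℝ) ≤ 2*κ*α^2 * |s| ^ (2*(2*α-1)) := by positivity
  calc (1:ℝ) = Real.sqrt 1 := Real.sqrt_one.symm
    _ ≤ ffun κ α s := Real.sqrt_le_sqrt (by linarith)

lemma ffun_le (hκ : 0 < κ) (s : ℝ) :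
    ffun κ α s ≤ 1 + Real.sqrt (2*κ*α^2) * |s| ^ (2*α-1) := by
  have := sqrt_le_one_add_mul (2*κ*α^2) (|s| ^ (2*α-1)) (by positivity)
    (Real.rpow_nonneg (abs_nonneg s) _)
  rw [ffun, abs_rpow_sq]
  exact this

lemma ffun_contOn : ContinuousOn (ffun κ α) (Set.Ioi (0:ℝ)) := by
  apply Continuous.comp_continuousOn Real.continuous_sqrt
  apply ContinuousOn.add continuousOn_const
  apply ContinuousOn.mul continuousOn_const
  apply ContinuousOn.rpow_const (continuous_abs.continuousOn)
  intro x hx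
  left
  simp only [abs_ne_zero]
  exact ne_of_gt hx

lemma ffun_intble (hκ : 0 < κ) (hα : 0 < α) {a b : ℝ} (ha : 0 ≤ a) (hb : 0 ≤ b) :
    IntervalIntegrable (ffun κ α) volume a b := by
  have hr : (-1:ℝ) < 2*α-1 := by linarith
  have hbase : IntervalIntegrable
      (fun s : ℝ => 1 + Real.sqrt (2*κ*α^2) * s ^ (2*α-1)) volume a b :=
    intervalIntegrable_const.add ((intervalIntegral.intervalIntegrable_rpow' hr).const_mul _)
  have hsub : Set.uIoc a b ⊆ Set.Ioi (0:ℝ) := by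
    intro s hs
    rcases Set.mem_uIoc.1 hs with ⟨h1, _⟩ | ⟨h1, _⟩
    · exact lt_of_le_of_lt ha h1
    · exact lt_of_le_of_lt hb h1
  refine hbase.mono_fun' ((ffun_contOn.mono hsub).aestronglyMeasurable measurableSet_uIoc) ?_
  refine (ae_restrict_iff' measurableSet_uIoc).2 (ae_of_all _ fun s hs => ?_)
  have hs0 : 0 < s := hsub hs
  have habs : |s| = s := abs_of_pos hs0
  have h1 : ffun κ α s ≤ 1 + Real.sqrt (2*κ*α^2) * s ^ (2*α-1) := by
    have := ffun_le (α := α) hκ s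
    rwa [habs] at this
  have h0 : 0 ≤ ffun κ α s := Real.sqrt_nonneg _
  show ‖ffun κ α s‖ ≤ 1 + Real.sqrt (2*κ*α^2) * s ^ (2*α-1)
  rw [Real.norm_eq_abs, abs_of_nonneg h0]
  exact h1

lemma gfun_diff (hκ : 0 < κ) (hα : 0 < α) {a b : ℝ} (ha : 0 ≤ a) (hb : 0 ≤ b) :
    gfun κ α b - gfun κ α a = ∫ s in a..b, ffun κ α s := by
  rw [gfun_eq, gfun_eq]
  exact intervalIntegral.integral_interval_sub_left
    (ffun_intble hκ hα le_rfl hb) (ffun_intble hκ hα le_rfl ha)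

lemma gfun_zero : gfun κ α 0 = 0 := intervalIntegral.integral_same

lemma gfun_neg (u : ℝ) : gfun κ α (-u) = - gfun κ α u := by
  have heven : ∀ s : ℝ, ffun κ α (-s) = ffun κ α s := by
    intro s; rw [ffun, ffun, abs_neg]
  have h1 : (∫ s in (0:ℝ)..u, ffun κ α (-s)) = ∫ s in (-u)..(-(0:ℝ)), ffun κ α s :=
    intervalIntegral.integral_comp_neg (fun s => ffun κ α s)
  rw [gfun_eq, gfun_eq]
  calc (∫ s in (0:ℝ)..(-u), ffun κ α s)
      = - ∫ s in (-u)..(-(0:ℝ)), ffun κ α s := by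
        rw [intervalIntegral.integral_symm]; norm_num
    _ = - ∫ s in (0:ℝ)..u, ffun κ α (-s) := by rw [h1]
    _ = - ∫ s in (0:ℝ)..u, ffun κ α s := by
        congr 1; exact intervalIntegral.integral_congr fun s _ => heven s

lemma gfun_ge (hκ : 0 < κ) (hα : 0 < α) {a b : ℝ} (ha : 0 ≤ a) (hab : a ≤ b) :
    b - a ≤ gfun κ α b - gfun κ α a := by
  have hb : 0 ≤ b := le_trans ha hab
  rw [gfun_diff hκ hα ha hb]
  have h1 : (∫ _ in a..b, (1:ℝ)) ≤ ∫ s in a..b, ffun κ α s := by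
    apply intervalIntegral.integral_mono_on hab intervalIntegrable_const
      (ffun_intble hκ hα ha hb)
    intro x _
    exact one_le_ffun hκ x
  simpa using h1

lemma gfun_mono (hκ : 0 < κ) (hα : 0 < α) : Monotone (gfun κ α) := by
  have hpos : ∀ u : ℝ, 0 ≤ u → 0 ≤ gfun κ α u := by
    intro u hu
    have := gfun_ge (α := α) hκ hα le_rfl hu
    rw [gfun_zero] at this
    linarith
  intro a b hab
  rcases le_total 0 a with ha | ha
  · have := gfun_ge hκ hα ha hab
    linarith
  · rcases le_total 0 b with hb | hb
    · have h1 : gfun κ α a ≤ 0 := by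
        have : gfun κ α a = - gfun κ α (-a) := by rw [← gfun_neg, neg_neg]
        rw [this]
        simpa using hpos (-a) (by linarith)
      exact le_trans h1 (hpos b hb)
    · have h2 : gfun κ α a = - gfun κ α (-a) := by rw [← gfun_neg, neg_neg]
      have h3 : gfun κ α b = - gfun κ α (-b) := by rw [← gfun_neg, neg_neg]
      have h4 := gfun_ge (α := α) hκ hα (by linarith : (0:ℝ) ≤ -b) (by linarith : -b ≤ -a)
      linarith

/-- the key quantitative bound -/
lemma key_bound (hκ : 0 < κ) (hα : 0 < α) {u : ℝ} (hu : 1 ≤ u) :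
    gfun κ α u - u ≤ Real.sqrt (2*κ*α^2) / (2*α)
      + ∫ s in (1:ℝ)..u, (2*κ*α^2)/2 * s ^ (4*α-2) := by
  have hu0 : (0:ℝ) ≤ u := by linarith
  set c := 2*κ*α^2 with hc
  have hc0 : 0 < c := by positivity
  have hI01 : IntervalIntegrable (ffun κ α) volume 0 1 := ffun_intble hκ hα le_rfl zero_le_one
  have hI1u : IntervalIntegrable (ffun κ α) volume 1 u := ffun_intble hκ hα zero_le_one hu0
  have hsplit : gfun κ α u = (∫ s in (0:ℝ)..1, ffun κ α s) + ∫ s in (1:ℝ)..u, ffun κ α s := by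
    rw [gfun_eq]
    exact (intervalIntegral.integral_add_adjacent_intervals hI01 hI1u).symm
  -- bound on [0,1]
  have hb1 : (∫ s in (0:ℝ)..1, ffun κ α s) ≤ 1 + Real.sqrt c / (2*α) := by
    have hmono : (∫ s in (0:ℝ)..1, ffun κ α s)
        ≤ ∫ s in (0:ℝ)..1, (1 + Real.sqrt c * s ^ (2*α-1)) := by
      apply intervalIntegral.integral_mono_on zero_le_one hI01
        (intervalIntegrable_const.add
          ((intervalIntegral.intervalIntegrable_rpow' (by linarith : (-1:ℝ) < 2*α-1)).const_mul _))
      intro x hx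
      have h := ffun_le (α := α) hκ x
      rwa [abs_of_nonneg hx.1] at h
    have hval : (∫ s in (0:ℝ)..1, (1 + Real.sqrt c * s ^ (2*α-1)))
        = 1 + Real.sqrt c / (2*α) := by
      rw [intervalIntegral.integral_add intervalIntegrable_const
          ((intervalIntegral.intervalIntegrable_rpow' (by linarith : (-1:ℝ) < 2*α-1)).const_mul _),
        intervalIntegral.integral_const_mul, integral_rpow (Or.inl (by linarith))]
      rw [Real.one_rpow, Real.zero_rpow (by linarith : 2*α-1+1 ≠ 0)]
      simp only [intervalIntegral.integral_const, smul_eq_mul, sub_zero, mul_one]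
      rw [show 2*α-1+1 = 2*α by ring]
      ring
    linarith
  -- bound on [1,u]
  have hb2 : (∫ s in (1:ℝ)..u, ffun κ α s)
      ≤ (u - 1) + ∫ s in (1:ℝ)..u, c/2 * s ^ (4*α-2) := by
    have hIr : IntervalIntegrable (fun s : ℝ => s ^ (4*α-2)) volume 1 u := by
      apply intervalIntegral.intervalIntegrable_rpow
      right
      rw [Set.uIcc_of_le hu]
      rintro ⟨h0, -⟩
      linarith
    have hmono : (∫ s in (1:ℝ)..u, ffun κ α s)
        ≤ ∫ s in (1:ℝ)..u, (1 + c/2 * s ^ (4*α-2)) := by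
      apply intervalIntegral.integral_mono_on hu hI1u
        (intervalIntegrable_const.add (hIr.const_mul _))
      intro x hx
      have hx1 : (1:ℝ) ≤ x := hx.1
      have hx0 : (0:ℝ) ≤ x := by linarith
      have hxe : |x| ^ (2*(2*α-1)) = x ^ (4*α-2) := by
        rw [abs_of_nonneg hx0, show 2*(2*α-1) = 4*α-2 by ring]
      have h := sqrt_le_one_add_half (c * |x| ^ (2*(2*α-1))) (by positivity)
      rw [hxe] at h
      show Real.sqrt (1 + c * |x| ^ (2*(2*α-1))) ≤ 1 + c/2 * x ^ (4*α-2)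
      rw [hxe]
      calc Real.sqrt (1 + c * x ^ (4*α-2)) ≤ 1 + c * x ^ (4*α-2) / 2 := h
        _ = 1 + c/2 * x ^ (4*α-2) := by ring
    have hval : (∫ s in (1:ℝ)..u, (1 + c/2 * s ^ (4*α-2)))
        = (u - 1) + ∫ s in (1:ℝ)..u, c/2 * s ^ (4*α-2) := by
      rw [intervalIntegral.integral_add intervalIntegrable_const (hIr.const_mul _)]
      simp only [intervalIntegral.integral_const, smul_eq_mul, mul_one]
    linarith
  linarith [hsplit]

/-- abstract final step -/
lemma final (A B : ℝ) (h : ℝ → ℝ)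
    (hκ : 0 < κ) (hα : 0 < α)
    (hrt : ∀ t, gfun κ α (h t) = t)
    (hbd : ∀ u : ℝ, 1 ≤ u → gfun κ α u - u ≤ A + B * Real.log u)
    (ε : ℝ) (hε : 0 < ε) :
    ∀ᶠ t in atTop, (t - h t) / Real.log (h t) ≤ B + ε := by
  have hmono := gfun_mono (α := α) hκ hα
  have htend : Tendsto h atTop atTop := by
    rw [tendsto_atTop_atTop]
    intro N
    refine ⟨gfun κ α N + 1, fun t ht => ?_⟩
    by_contra hlt
    push_neg at hlt
    have := hmono hlt.le
    rw [hrt] at this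
    linarith
  have hev : ∀ᶠ t in atTop, Real.exp (max 1 (A/ε)) ≤ h t := htend.eventually_ge_atTop _
  filter_upwards [hev] with t ht
  set u := h t with hu_def
  have hlog : max 1 (A/ε) ≤ Real.log u := by
    rw [← Real.log_exp (max 1 (A/ε))]
    exact (Real.log_le_log_iff (Real.exp_pos _)
      (lt_of_lt_of_le (Real.exp_pos _) ht)).2 ht
  have hlogpos : (0:ℝ) < Real.log u :=
    lt_of_lt_of_le (by simpa using lt_of_lt_of_le one_pos (le_max_left 1 (A/ε))) hlog
  have hu1 : (1:ℝ) ≤ u := by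
    have h1 : Real.exp 1 ≤ u := le_trans (Real.exp_le_exp.2 (le_max_left _ _)) ht
    linarith [Real.add_one_le_exp (1:ℝ)]
  have hA : A ≤ ε * Real.log u := by
    have h2 : A / ε ≤ Real.log u := le_trans (le_max_right 1 (A/ε)) hlog
    calc A = (A / ε) * ε := by field_simp
      _ ≤ Real.log u * ε := mul_le_mul_of_nonneg_right h2 hε.le
      _ = ε * Real.log u := mul_comm _ _
  have hkey : t - u ≤ A + B * Real.log u := by
    have ht' : gfun κ α u = t := hrt t
    linarith [hbd u hu1]
  rw [div_le_iff₀ hlogpos]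
  calc t - u ≤ A + B * Real.log u := hkey
    _ ≤ ε * Real.log u + B * Real.log u := by linarith
    _ = (B + ε) * Real.log u := by ring

end Stmt15Aux

open Stmt15Aux in
theorem stmt15 (κ : ℝ) (hκ : 0 < κ) :
    (∀ h : ℝ → ℝ, Function.LeftInverse h (gfun κ (1/4)) →
      Function.RightInverse h (gfun κ (1/4)) →
      ∀ ε > (0:ℝ), ∀ᶠ t in Filter.atTop, (t - h t) / Real.log (h t) ≤ κ/16 + ε) ∧
    (∀ α : ℝ, 0 < α → α < 1/4 → ∀ h : ℝ → ℝ, Function.LeftInverse h (gfun κ α) →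
      Function.RightInverse h (gfun κ α) →
      ∀ ε > (0:ℝ), ∀ᶠ t in Filter.atTop, (t - h t) / Real.log (h t) ≤ 0 + ε) := by
  constructor
  · intro h _ hri ε hε
    have hα : (0:ℝ) < 1/4 := by norm_num
    apply final (κ := κ) (α := 1/4) (Real.sqrt (2*κ*(1/4)^2) / (2*(1/4))) (κ/16) h hκ hα
      (fun t => hri t) ?_ ε hε
    intro u hu
    have hk := key_bound (κ := κ) (α := (1/4:ℝ)) hκ hα hu
    have hval : (∫ s in (1:ℝ)..u, (2*κ*(1/4:ℝ)^2)/2 * s ^ (4*(1/4:ℝ)-2))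
        = κ/16 * Real.log u := by
      rw [show (4*(1/4:ℝ)-2) = -1 by norm_num]
      have h0 : (0:ℝ) ∉ Set.uIcc (1:ℝ) u := by
        rw [Set.uIcc_of_le hu]
        rintro ⟨h1, -⟩
        linarith
      have hcg : (∫ s in (1:ℝ)..u, (2*κ*(1/4:ℝ)^2)/2 * s ^ (-1:ℝ))
          = (2*κ*(1/4:ℝ)^2)/2 * ∫ s in (1:ℝ)..u, s⁻¹ := by
        rw [intervalIntegral.integral_const_mul]
        congr 1
        apply intervalIntegral.integral_congr
        intro x hx
        rw [Set.uIcc_of_le hu] at hx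
        show x ^ (-1:ℝ) = x⁻¹
        exact Real.rpow_neg_one x
      rw [hcg, integral_inv h0]
      rw [div_one]
      ring
    rw [hval] at hk
    exact hk
  · intro α hα hα4 h _ hri ε hε
    have h0ε : (0:ℝ) + ε = 0 + ε := rfl
    apply final (κ := κ) (α := α)
      (Real.sqrt (2*κ*α^2) / (2*α) + (2*κ*α^2)/2 * (1/(1-4*α))) 0 h hκ hα
      (fun t => hri t) ?_ ε hε
    intro u hu
    have hk := key_bound (κ := κ) (α := α) hκ hα hu
    have hc0 : (0:ℝ) < 2*κ*α^2 := by positivity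
    have hexp : (4*α-2) + 1 = 4*α-1 := by ring
    have hne : (4*α-2 : ℝ) ≠ -1 := by intro hcon; nlinarith
    have h0 : (0:ℝ) ∉ Set.uIcc (1:ℝ) u := by
      rw [Set.uIcc_of_le hu]
      rintro ⟨h1, -⟩
      linarith
    have hval : (∫ s in (1:ℝ)..u, (2*κ*α^2)/2 * s ^ (4*α-2))
        = (2*κ*α^2)/2 * ((u ^ (4*α-1) - 1) / (4*α-1)) := by
      rw [intervalIntegral.integral_const_mul, integral_rpow (Or.inr ⟨hne, h0⟩)]
      rw [Real.one_rpow, hexp]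
    have hbnd : (u ^ (4*α-1) - 1) / (4*α-1) ≤ 1/(1-4*α) := by
      have hneg : (4*α-1:ℝ) < 0 := by linarith
      have h14 : (0:ℝ) < 1-4*α := by linarith
      have hupos : (0:ℝ) < u ^ (4*α-1) := Real.rpow_pos_of_pos (by linarith) _
      rw [div_le_iff_of_neg hneg]
      have heq : 1/(1-4*α) * (4*α-1) = -1 := by
        field_simp
        ring
      linarith
    have : (∫ s in (1:ℝ)..u, (2*κ*α^2)/2 * s ^ (4*α-2))
        ≤ (2*κ*α^2)/2 * (1/(1-4*α)) := by
      rw [hval]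
      exact mul_le_mul_of_nonneg_left hbnd (by positivity)
    simp only [zero_mul, add_zero]
    linarith
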